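/- Let d ≥ 1 be an integer and, for a real number x and an integer y with 0 ≤ y ≤ 2^d − 1, define Snap_d(x, y) := max(⌊x·2^d − 2^{−d}·y⌋·2^{−d}, 0). Then for all real numbers a, b, the fraction of integers y ∈ {0, 1, …, 2^d − 1} for which Snap_d(a, y) ≠ Snap_d(b, y) is at most 2^d·|a − b| + 2^{−d}; equivalently, Pr_{y}[Snap_d(a,y) ≠ Snap_d(b,y)] ≤ 2^d·|a − b| + 2^{−d} for y uniform in {0, …, 2^d − 1}. -/

import Mathlib

/-- The randomized rounding ('snap') operation of the Saks–Zhou scheme: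
`Snap_d(x, y) = max(⌊x·2^d − 2^{−d}·y⌋·2^{−d}, 0)`. -/
noncomputable def snap (d : ℕ) (x : ℝ) (y : ℕ) : ℝ :=
  max ((⌊x * 2 ^ d - (2 : ℝ) ^ (-(d : ℤ)) * y⌋ : ℝ) * (2 : ℝ) ^ (-(d : ℤ))) 0

lemma snap_key (d : ℕ) {a b : ℝ} (hab : a ≤ b) :
    (((Finset.range (2 ^ d)).filter fun y => snap d a y ≠ snap d b y).card : ℝ)
      ≤ ((2 : ℝ) ^ d * |a - b| + (2 : ℝ) ^ (-(d : ℤ))) * 2 ^ d := by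
  have hP : (0:ℝ) < 2 ^ d := by positivity
  have hεe : (2:ℝ) ^ (-(d:ℤ)) = ((2:ℝ) ^ d)⁻¹ := by
    rw [zpow_neg, zpow_natCast]
  have habs : |a - b| = b - a := by
    rw [abs_sub_comm, abs_of_nonneg (sub_nonneg.mpr hab)]
  have hcard : (((Finset.range (2 ^ d)).filter fun y => snap d a y ≠ snap d b y).card)
      ≤ (Finset.Ioc ⌊a * (2 ^ d * 2 ^ d)⌋ ⌊b * (2 ^ d * 2 ^ d)⌋).card := by
    apply Finset.card_le_card_of_injOn
      (fun y : ℕ => ((⌊a * 2 ^ d - (2:ℝ) ^ (-(d:ℤ)) * (y:ℝ)⌋ + 1) * 2 ^ d + (y : ℤ) : ℤ))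
    · intro y hy
      simp only [Finset.mem_coe, Finset.mem_filter, Finset.mem_range] at hy
      obtain ⟨hy1, hy2⟩ := hy
      have hmono : ⌊a * 2 ^ d - (2:ℝ) ^ (-(d:ℤ)) * y⌋ ≤ ⌊b * 2 ^ d - (2:ℝ) ^ (-(d:ℤ)) * y⌋ := by
        apply Int.floor_mono
        have : a * 2 ^ d ≤ b * 2 ^ d := by nlinarith
        linarith
      have hne : ⌊a * 2 ^ d - (2:ℝ) ^ (-(d:ℤ)) * y⌋ ≠ ⌊b * 2 ^ d - (2:ℝ) ^ (-(d:ℤ)) * y⌋ := by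
        intro h
        exact hy2 (by simp only [snap, h])
      have hlt : ⌊a * 2 ^ d - (2:ℝ) ^ (-(d:ℤ)) * y⌋ < ⌊b * 2 ^ d - (2:ℝ) ^ (-(d:ℤ)) * y⌋ :=
        lt_of_le_of_ne hmono hne
      set m : ℤ := ⌊a * 2 ^ d - (2:ℝ) ^ (-(d:ℤ)) * y⌋ with hm
      rw [Finset.mem_coe, Finset.mem_Ioc]
      constructor
      · rw [Int.floor_lt]
        have h1 : a * 2 ^ d - (2:ℝ) ^ (-(d:ℤ)) * y < (m : ℝ) + 1 := Int.lt_floor_add_one _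
        rw [hεe] at h1
        have h1' := mul_lt_mul_of_pos_right h1 hP
        have hexpand : (a * 2 ^ d - ((2:ℝ) ^ d)⁻¹ * y) * 2 ^ d = a * (2 ^ d * 2 ^ d) - y := by
          field_simp
        rw [hexpand] at h1'
        push_cast
        linarith
      · rw [Int.le_floor]
        have h2 : ((m : ℝ) + 1) ≤ ⌊b * 2 ^ d - (2:ℝ) ^ (-(d:ℤ)) * y⌋ := by
          push_cast; exact_mod_cast hlt
        have h3 : ((⌊b * 2 ^ d - (2:ℝ) ^ (-(d:ℤ)) * y⌋ : ℝ)) ≤ b * 2 ^ d - (2:ℝ) ^ (-(d:ℤ)) * y :=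
          Int.floor_le _
        rw [hεe] at h3
        rw [hεe] at h2
        have h4 : (m : ℝ) + 1 ≤ b * 2 ^ d - ((2:ℝ) ^ d)⁻¹ * y := le_trans h2 h3
        have h4' := mul_le_mul_of_nonneg_right h4 hP.le
        have hexpand : (b * 2 ^ d - ((2:ℝ) ^ d)⁻¹ * y) * 2 ^ d = b * (2 ^ d * 2 ^ d) - y := by
          field_simp
        rw [hexpand] at h4'
        push_cast
        linarith
    · intro y hy y' hy' heq
      simp only [Finset.coe_filter, Set.mem_setOf_eq, Finset.mem_range] at hy hy'
      have hyl : (y : ℤ) < 2 ^ d := by exact_mod_cast hy.1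
      have hyl' : (y' : ℤ) < 2 ^ d := by exact_mod_cast hy'.1
      have heq' : (⌊a * 2 ^ d - (2:ℝ) ^ (-(d:ℤ)) * (y:ℝ)⌋ + 1) * 2 ^ d + (y : ℤ)
          = (⌊a * 2 ^ d - (2:ℝ) ^ (-(d:ℤ)) * (y':ℝ)⌋ + 1) * 2 ^ d + (y' : ℤ) := heq
      have hdvd : (2 ^ d : ℤ) ∣ ((y : ℤ) - y') :=
        ⟨⌊a * 2 ^ d - (2:ℝ) ^ (-(d:ℤ)) * (y':ℝ)⌋ - ⌊a * 2 ^ d - (2:ℝ) ^ (-(d:ℤ)) * (y:ℝ)⌋,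
          by linarith [heq']⟩
      have habs2 : |(y : ℤ) - y'| < 2 ^ d := by
        rw [abs_lt]
        constructor <;> [linarith [Int.ofNat_nonneg y]; linarith [Int.ofNat_nonneg y']]
      have := Int.eq_zero_of_abs_lt_dvd hdvd habs2
      omega
  have hIoc : ((Finset.Ioc ⌊a * (2 ^ d * 2 ^ d)⌋ ⌊b * (2 ^ d * 2 ^ d)⌋).card : ℝ)
      ≤ (b - a) * (2 ^ d * 2 ^ d) + 1 := by
    rw [Int.card_Ioc]
    have h1 : ((⌊b * (2 ^ d * 2 ^ d)⌋ - ⌊a * (2 ^ d * 2 ^ d)⌋).toNat : ℤ)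
        = max (⌊b * (2 ^ d * 2 ^ d)⌋ - ⌊a * (2 ^ d * 2 ^ d)⌋) 0 := Int.toNat_eq_max _
    have h2 : ((⌊b * (2 ^ d * 2 ^ d)⌋ - ⌊a * (2 ^ d * 2 ^ d)⌋).toNat : ℝ)
        = max (((⌊b * (2 ^ d * 2 ^ d)⌋ : ℝ)) - ⌊a * (2 ^ d * 2 ^ d)⌋) 0 := by
      exact_mod_cast congrArg (fun z : ℤ => (z : ℝ)) h1
    rw [h2]
    apply max_le
    · have hb := Int.floor_le (b * (2 ^ d * 2 ^ d))
      have ha := Int.lt_floor_add_one (a * (2 ^ d * 2 ^ d))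
      nlinarith
    · nlinarith
  have hRHS : ((2 : ℝ) ^ d * |a - b| + (2 : ℝ) ^ (-(d:ℤ))) * 2 ^ d
      = (b - a) * (2 ^ d * 2 ^ d) + 1 := by
    rw [habs, hεe]
    field_simp
  rw [hRHS]
  calc (((Finset.range (2 ^ d)).filter fun y => snap d a y ≠ snap d b y).card : ℝ)
      ≤ ((Finset.Ioc ⌊a * (2 ^ d * 2 ^ d)⌋ ⌊b * (2 ^ d * 2 ^ d)⌋).card : ℝ) := by
        exact_mod_cast hcard
    _ ≤ (b - a) * (2 ^ d * 2 ^ d) + 1 := hIoc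

/-- For all reals `a, b`, the fraction of `y ∈ {0,…,2^d−1}` with
`Snap_d(a,y) ≠ Snap_d(b,y)` is at most `2^d·|a−b| + 2^{−d}`; stated here as a bound
on the number of such `y` against `(2^d·|a−b| + 2^{−d})·2^d`. -/
theorem stmt_13 (d : ℕ) (hd : 1 ≤ d) (a b : ℝ) :
    (((Finset.range (2 ^ d)).filter fun y => snap d a y ≠ snap d b y).card : ℝ)
      ≤ ((2 : ℝ) ^ d * |a - b| + (2 : ℝ) ^ (-(d : ℤ))) * 2 ^ d := by
  rcases le_total a b with h | h
  · exact snap_key d h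
  · have hset : ((Finset.range (2 ^ d)).filter fun y => snap d a y ≠ snap d b y)
        = ((Finset.range (2 ^ d)).filter fun y => snap d b y ≠ snap d a y) := by
      apply Finset.filter_congr
      intro y _
      simp [ne_comm]
    rw [hset]
    have := snap_key d h
    rwa [abs_sub_comm b a] at this
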